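/- Let 𝔤₁₈ be the Lie algebra with brackets [e₁,e₂]=e₄, [e₁,e₃]=e₅, [e₂,e₃]=e₆, and ω₁(λ) = e¹∧e⁶ + λ e²∧e⁵ + (λ−1)e³∧e⁴ with λ = −1, i.e. ω₁ = e¹∧e⁶ − e²∧e⁵ − 2e³∧e⁴. The structure J with J(e₂)=e₁, J(e₁)=−e₂, J(e₄)=b e₃, J(e₃)=−(1/b)e₄, J(e₆)=e₅, J(e₅)=−e₆ (b ≠ 0) is an integrable complex structure compatible with ω₁, and the lowered curvature tensor of g = ω₁∘J has unique nonzero component R(e₁,e₂,e₁,e₂) = 2b. -/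
import Mathlib


noncomputable section

/-- The underlying space ℝ⁶ of the Lie algebra 𝔤₁₈. -/
abbrev V18 : Type := Fin 6 → ℝ

/-- Standard basis vectors e₁,…,e₆ (0-indexed). -/
def e18 (i : Fin 6) : V18 := Pi.single i 1

/-- Bracket of 𝔤₁₈: [e₁,e₂]=e₄, [e₁,e₃]=e₅, [e₂,e₃]=e₆. -/
def br18 (X Y : V18) : V18 :=
  ![0, 0, 0,
    X 0 * Y 1 - X 1 * Y 0,
    X 0 * Y 2 - X 2 * Y 0,
    X 1 * Y 2 - X 2 * Y 1]

/-- ω₁ = e¹∧e⁶ − e²∧e⁵ − 2e³∧e⁴ (the form ω₁(λ) at λ = −1). -/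
def om18 (X Y : V18) : ℝ :=
  (X 0 * Y 5 - X 5 * Y 0) - (X 1 * Y 4 - X 4 * Y 1) - 2 * (X 2 * Y 3 - X 3 * Y 2)

/-- J(e₂)=e₁, J(e₁)=−e₂, J(e₄)=b·e₃, J(e₃)=−(1/b)·e₄, J(e₆)=e₅, J(e₅)=−e₆. -/
def J18 (b : ℝ) (X : V18) : V18 :=
  ![X 1, -X 0, b * X 3, -(1 / b) * X 2, X 5, -X 4]

/-- Associated metric g(X,Y) = ω₁(X, JY). -/
def g18 (b : ℝ) (X Y : V18) : ℝ := om18 X (J18 b Y)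

/-- The explicit Levi-Civita connection of g18. -/
def N18 (b : ℝ) (X Y : V18) : V18 :=
  ![0, 0, b / 2 * (X 0 * Y 0 + X 1 * Y 1), (X 0 * Y 1 - X 1 * Y 0) / 2,
    X 0 * Y 2 - b * (X 1 * Y 3 + X 3 * Y 1), X 1 * Y 2 + b * (X 0 * Y 3 + X 3 * Y 0)]

lemma vec6_0 (a0 a1 a2 a3 a4 a5 : ℝ) : ![a0,a1,a2,a3,a4,a5] (0:Fin 6) = a0 := rfl
lemma vec6_1 (a0 a1 a2 a3 a4 a5 : ℝ) : ![a0,a1,a2,a3,a4,a5] (1:Fin 6) = a1 := rfl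
lemma vec6_2 (a0 a1 a2 a3 a4 a5 : ℝ) : ![a0,a1,a2,a3,a4,a5] (2:Fin 6) = a2 := rfl
lemma vec6_3 (a0 a1 a2 a3 a4 a5 : ℝ) : ![a0,a1,a2,a3,a4,a5] (3:Fin 6) = a3 := rfl
lemma vec6_4 (a0 a1 a2 a3 a4 a5 : ℝ) : ![a0,a1,a2,a3,a4,a5] (4:Fin 6) = a4 := rfl
lemma vec6_5 (a0 a1 a2 a3 a4 a5 : ℝ) : ![a0,a1,a2,a3,a4,a5] (5:Fin 6) = a5 := rfl

lemma koszulN (b : ℝ) (hb : b ≠ 0) (X Y Z : V18) :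
    2 * g18 b (N18 b X Y) Z
      = g18 b (br18 X Y) Z + g18 b (br18 Z X) Y + g18 b X (br18 Z Y) := by
  simp only [g18, om18, J18, br18, N18, vec6_0, vec6_1, vec6_2, vec6_3, vec6_4, vec6_5]
  field_simp
  ring

lemma nondeg18 (b : ℝ) (hb : b ≠ 0) (v w : V18)
    (h : ∀ z, g18 b v z = g18 b w z) : v = w := by
  have h0 := h (e18 4)
  have h1 := h (e18 5)
  have h2 := h (e18 2)
  have h3 := h (e18 3)
  have h4 := h (e18 0)
  have h5 := h (e18 1)
  simp [g18, om18, J18, e18, vec6_0, vec6_1, vec6_2, vec6_3, vec6_4, vec6_5,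
    Pi.single_apply] at h0 h1 h2 h3 h4 h5
  have h2' : v 2 = w 2 := h2.resolve_right hb
  have h3' : v 3 = w 3 := h3.resolve_right hb
  funext i
  fin_cases i <;> simp <;> linarith

lemma curvN (b : ℝ) (hb : b ≠ 0) (X Y Z W : V18) :
    g18 b (N18 b X (N18 b Y Z) - N18 b Y (N18 b X Z) - N18 b (br18 X Y) Z) W
      = 2 * b * (X 0 * Y 1 - X 1 * Y 0) * (Z 0 * W 1 - Z 1 * W 0) := by
  simp only [g18, om18, J18, br18, N18, vec6_0, vec6_1, vec6_2, vec6_3, vec6_4, vec6_5,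
    Pi.sub_apply]
  field_simp
  ring

lemma pair18 (i j : Fin 6) (h : ({i, j} : Finset (Fin 6)) ≠ {0, 1}) :
    e18 i 0 * e18 j 1 - e18 i 1 * e18 j 0 = 0 := by
  fin_cases i <;> fin_cases j <;>
    first
      | exact absurd (by decide) h
      | (simp [e18, Pi.single_apply])

/-- for b ≠ 0, J is an integrable complex structure compatible with ω₁
on 𝔤₁₈, and the lowered curvature tensor of g = ω₁∘J has unique nonzero component
R(e₁,e₂,e₁,e₂) = 2b. -/
theorem g18_pseudoKaehler_curvature (b : ℝ) (hb : b ≠ 0) :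
    (∀ X : V18, J18 b (J18 b X) = -X) ∧
    (∀ X Y : V18,
      br18 (J18 b X) (J18 b Y) - br18 X Y
        - J18 b (br18 (J18 b X) Y) - J18 b (br18 X (J18 b Y)) = 0) ∧
    (∀ X Y : V18, om18 (J18 b X) (J18 b Y) = om18 X Y) ∧
    (∀ (nabla : V18 → V18 → V18),
      (∀ X Y Z : V18,
        2 * g18 b (nabla X Y) Z
          = g18 b (br18 X Y) Z + g18 b (br18 Z X) Y + g18 b X (br18 Z Y)) →
      ∀ (R : V18 → V18 → V18 → V18),
        (∀ X Y Z : V18,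
          R X Y Z = nabla X (nabla Y Z) - nabla Y (nabla X Z) - nabla (br18 X Y) Z) →
        g18 b (R (e18 0) (e18 1) (e18 0)) (e18 1) = 2 * b ∧
        (∀ i j k l : Fin 6,
          ¬(({i, j} : Finset (Fin 6)) = {0, 1} ∧ ({k, l} : Finset (Fin 6)) = {0, 1}) →
          g18 b (R (e18 i) (e18 j) (e18 k)) (e18 l) = 0)) := by
  refine ⟨?_, ?_, ?_, ?_⟩
  · intro X
    funext i; fin_cases i <;> simp [J18, vec6_4, vec6_5] <;> field_simp
  · intro X Y
    funext i; fin_cases i <;>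
      simp [J18, br18, vec6_4, vec6_5, sub_eq_zero] <;> (try field_simp) <;> (try ring)
  · intro X Y
    simp only [om18, J18, vec6_0, vec6_1, vec6_2, vec6_3, vec6_4, vec6_5]
    field_simp
    ring
  · intro nabla hk R hR
    have hNab : ∀ X Y, nabla X Y = N18 b X Y := by
      intro X Y
      refine nondeg18 b hb _ _ (fun z => ?_)
      have h1 := hk X Y z
      have h2 := koszulN b hb X Y z
      linarith
    have hRlow : ∀ X Y Z W : V18, g18 b (R X Y Z) W
        = 2 * b * (X 0 * Y 1 - X 1 * Y 0) * (Z 0 * W 1 - Z 1 * W 0) := by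
      intro X Y Z W
      rw [hR]
      simp only [hNab]
      exact curvN b hb X Y Z W
    constructor
    · rw [hRlow]
      simp [e18, Pi.single_apply]
    · intro i j k l h
      rw [hRlow]
      rcases not_and_or.mp h with h' | h'
      · rw [pair18 i j h']; ring
      · rw [pair18 k l h']; ring
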